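/- Let C ∈ M_4 be the correlation matrix with ones on the diagonal, entries C(1,2) = C(2,1) = C(1,3) = C(3,1) = 1/√2, and all other entries 0. Then rank(C) = 3 and C is toroidal with toroidal rank equal to 4. -/

import Mathlib

open scoped Kronecker ComplexOrder
open Matrix

/-- Square complex matrices indexed by `α`. -/
abbrev Mat (α : Type*) := Matrix α α ℂ

/-- The Choi matrix `J(Φ) = ∑_{j,k} Φ(E_{j,k}) ⊗ E_{j,k}` of a linear map between
matrix spaces. -/
noncomputable def choiMatrix {α β : Type*} [Fintype α] [DecidableEq α]
    (Φ : Mat α →ₗ[ℂ] Mat β) : Matrix (β × α) (β × α) ℂ :=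
  ∑ j : α, ∑ k : α, (Φ (Matrix.single j k 1)) ⊗ₖ (Matrix.single j k 1)

/-- The Choi rank of a linear map: the rank of its Choi matrix. -/
noncomputable def choiRank {α β : Type*} [Fintype α] [DecidableEq α] [Fintype β]
    (Φ : Mat α →ₗ[ℂ] Mat β) : ℕ :=
  (choiMatrix Φ).rank

/-- `A` is a Kraus representation of `Φ` (with the trace-preservation condition). -/
def IsKrausRep {α β : Type*} [Fintype α] [DecidableEq α] [Fintype β] {r : ℕ}
    (Φ : Mat α →ₗ[ℂ] Mat β) (A : Fin r → Matrix β α ℂ) : Prop :=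
  (∀ X, Φ X = ∑ k, A k * X * (A k)ᴴ) ∧ (∑ k, (A k)ᴴ * A k = 1)

/-- A quantum channel: a linear map admitting a Kraus representation
`Φ(X) = ∑ₖ Aₖ X Aₖ*` with `∑ₖ Aₖ* Aₖ = 1`. -/
def IsChannel {α β : Type*} [Fintype α] [DecidableEq α] [Fintype β]
    (Φ : Mat α →ₗ[ℂ] Mat β) : Prop :=
  ∃ (r : ℕ) (A : Fin r → Matrix β α ℂ), IsKrausRep Φ A

/-- The dimension of the operator system `span{Aⱼᴴ Aₖ}` generated by a Kraus family. -/
noncomputable def krausOpSystemDim {α β : Type*} [Fintype α] [Fintype β] {r : ℕ}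
    (A : Fin r → Matrix β α ℂ) : ℕ :=
  Module.finrank ℂ (Submodule.span ℂ {M : Mat α | ∃ j k, M = (A j)ᴴ * A k})

/-- A mixed-unitary decomposition of `Φ` with `N` terms: a probability vector `p`
and unitaries `U` with `Φ(X) = ∑ₖ pₖ Uₖ X Uₖ*`. -/
def IsMixedUnitaryDecomp {α : Type*} [Fintype α] [DecidableEq α] {N : ℕ}
    (Φ : Mat α →ₗ[ℂ] Mat α) (p : Fin N → ℝ) (U : Fin N → Mat α) : Prop :=
  (∀ k, 0 ≤ p k) ∧ (∑ k, p k = 1) ∧ (∀ k, U k ∈ Matrix.unitaryGroup α ℂ) ∧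
    (∀ X, Φ X = ∑ k, (p k : ℂ) • (U k * X * (U k)ᴴ))

/-- `Φ` is a mixed-unitary channel. -/
def IsMixedUnitary {α : Type*} [Fintype α] [DecidableEq α]
    (Φ : Mat α →ₗ[ℂ] Mat α) : Prop :=
  ∃ (N : ℕ) (p : Fin N → ℝ) (U : Fin N → Mat α), IsMixedUnitaryDecomp Φ p U

/-- The mixed-unitary rank: the minimum number of unitary conjugations in a
mixed-unitary decomposition. -/
noncomputable def mixedUnitaryRank {α : Type*} [Fintype α] [DecidableEq α]
    (Φ : Mat α →ₗ[ℂ] Mat α) : ℕ :=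
  sInf {N : ℕ | ∃ (p : Fin N → ℝ) (U : Fin N → Mat α), IsMixedUnitaryDecomp Φ p U}

/-- A mixed-unitary decomposition is the *unique* mixed-unitary decomposition of `Φ` if
every other mixed-unitary decomposition of `Φ` arises by partitioning its terms into
groups of phase-multiples of the `Uₖ` with matching total probabilities. -/
def IsUniqueMixedUnitaryDecomp {α : Type*} [Fintype α] [DecidableEq α] {N : ℕ}
    (Φ : Mat α →ₗ[ℂ] Mat α) (p : Fin N → ℝ) (U : Fin N → Mat α) : Prop :=
  IsMixedUnitaryDecomp Φ p U ∧
    ∀ (t : ℕ) (q : Fin t → ℝ) (V : Fin t → Mat α), IsMixedUnitaryDecomp Φ q V →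
      ∃ T : Fin t → Fin N,
        (∀ j, ∃ c : ℂ, ‖c‖ = 1 ∧ V j = c • U (T j)) ∧
        (∀ k, p k = ∑ j ∈ Finset.univ.filter (fun j => T j = k), q j)

/-- `Φ` possesses a unique mixed-unitary decomposition. -/
def HasUniqueMixedUnitaryDecomp {α : Type*} [Fintype α] [DecidableEq α]
    (Φ : Mat α →ₗ[ℂ] Mat α) : Prop :=
  ∃ (N : ℕ) (p : Fin N → ℝ) (U : Fin N → Mat α), IsUniqueMixedUnitaryDecomp Φ p U

/-- `Ψ : M_α → M_N` is complementary to `Φ : M_α → M_α`: there is a Kraus representation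
`Φ(X) = ∑ₖ Bₖ X Bₖ*` with `N` terms such that `Ψ(X)` has `(j,k)` entry `⟨Bₖ* Bⱼ, X⟩`. -/
def IsComplementary {α : Type*} [Fintype α] [DecidableEq α] {N : ℕ}
    (Φ : Mat α →ₗ[ℂ] Mat α) (Ψ : Mat α →ₗ[ℂ] Mat (Fin N)) : Prop :=
  ∃ B : Fin N → Mat α, IsKrausRep Φ B ∧
    ∀ X, Ψ X = Matrix.of fun j k => ((((B k)ᴴ * B j)ᴴ) * X).trace

/-- A unitary channel: conjugation by a fixed unitary matrix. -/
def IsUnitaryChannel {α : Type*} [Fintype α] [DecidableEq α]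
    (Ψ : Mat α →ₗ[ℂ] Mat α) : Prop :=
  ∃ U ∈ Matrix.unitaryGroup α ℂ, ∀ X, Ψ X = U * X * Uᴴ

/-- A correlation matrix: positive semidefinite with unit diagonal. -/
def IsCorrelation {α : Type*} [Fintype α] (C : Mat α) : Prop :=
  C.PosSemidef ∧ ∀ i, C i i = 1

/-- A toroidal decomposition of `C` with `N` terms: `C = ∑ₖ pₖ uₖ uₖ*` where each `uₖ`
has all entries of modulus one. -/
def IsToroidalDecomp {α : Type*} [Fintype α] {N : ℕ}
    (C : Mat α) (p : Fin N → ℝ) (u : Fin N → α → ℂ) : Prop :=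
  (∀ k, 0 ≤ p k) ∧ (∑ k, p k = 1) ∧ (∀ k i, ‖u k i‖ = 1) ∧
    C = ∑ k, (p k : ℂ) • Matrix.vecMulVec (u k) (star (u k))

/-- A correlation matrix is toroidal if it is a convex combination of rank-one
correlation matrices `u u*` with `u` having unimodular entries. -/
def IsToroidal {α : Type*} [Fintype α] (C : Mat α) : Prop :=
  ∃ (N : ℕ) (p : Fin N → ℝ) (u : Fin N → α → ℂ), IsToroidalDecomp C p u

/-- The toroidal rank of a correlation matrix. -/
noncomputable def toroidalRank {α : Type*} [Fintype α] (C : Mat α) : ℕ :=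
  sInf {N : ℕ | ∃ (p : Fin N → ℝ) (u : Fin N → α → ℂ), IsToroidalDecomp C p u}


section Stmt13Aux

open Complex Finset

noncomputable abbrev ss : ℂ := (Real.sqrt 2 : ℂ)⁻¹

private lemma hs2 : ss * ss = 1/2 := by
  unfold ss; rw [← mul_inv]; norm_cast
  rw [Real.mul_self_sqrt (by norm_num)]; norm_num

private lemma hconj : (starRingEnd ℂ) ss = ss := by
  unfold ss; rw [map_inv₀, Complex.conj_ofReal]

noncomputable def om : ℂ := ss * (1 + I)
noncomputable def omb : ℂ := ss * (1 - I)

private lemma hcom : (starRingEnd ℂ) om = omb := by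
  simp only [om, omb, _root_.map_mul, _root_.map_add, map_sub, _root_.map_one,
    Complex.conj_I, hconj]
  ring

private lemma hcomb : (starRingEnd ℂ) omb = om := by
  simp only [om, omb, _root_.map_mul, _root_.map_add, map_sub, _root_.map_one,
    Complex.conj_I, hconj]
  ring

private lemma hom2 : om * om = I := by
  simp only [om]
  linear_combination (1+Complex.I)^2 * hs2 + (1/2) * Complex.I_mul_I

private lemma homb2 : omb * omb = -I := by
  simp only [omb]
  linear_combination (1-Complex.I)^2 * hs2 + (1/2) * Complex.I_mul_I

private lemma hoomb : om * omb = 1 := by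
  simp only [om, omb]
  linear_combination (1 - Complex.I*Complex.I) * hs2 - (1/2) * Complex.I_mul_I

private lemma hsum : om + omb = 2 * ss := by simp only [om, omb]; ring

private lemma hnom : ‖om‖ = 1 := by
  have h : Complex.normSq om = 1 := by
    simp [om, Complex.normSq_apply, ss, Complex.normSq_mul]
    have h2 : Real.sqrt 2 * Real.sqrt 2 = 2 := Real.mul_self_sqrt (by norm_num)
    linear_combination (1/2) * h2
  rw [Complex.norm_def, h, Real.sqrt_one]

private lemma hnomb : ‖omb‖ = 1 := by
  rw [← hcom, RCLike.norm_conj, hnom]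

private lemma habsom : ‖om‖ = 1 := by
  exact hnom

private lemma habsomb : ‖omb‖ = 1 := by
  exact hnomb

/-- The four toroidal vectors. -/
noncomputable def uu : Fin 4 → Fin 4 → ℂ :=
  ![![1, om, omb, 1], ![1, om, omb, -1], ![1, omb, om, 1], ![1, omb, om, -1]]

set_option maxHeartbeats 1000000 in
private lemma uu_decomp :
    (!![1, ss, ss, 0; ss, 1, 0, 0; ss, 0, 1, 0; 0, 0, 0, 1] : Matrix (Fin 4) (Fin 4) ℂ)
    = ∑ k, ((fun _ => (1/4 : ℝ)) k : ℂ) • Matrix.vecMulVec (uu k) (star (uu k)) := by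
  ext i j
  fin_cases i <;> fin_cases j <;>
    · simp only [Matrix.sum_apply, Matrix.smul_apply, Matrix.vecMulVec_apply, Pi.star_apply,
        Fin.sum_univ_four, uu, Complex.star_def, smul_eq_mul]
      simp only [Matrix.cons_val_zero, Matrix.cons_val_one, Matrix.cons_val_two,
        Matrix.cons_val_three, Matrix.head_cons, Matrix.tail_cons, Matrix.head_fin_const,
        Matrix.cons_val_fin_one, Matrix.cons_val', Matrix.empty_val',
        Matrix.cons_val_zero, Matrix.of_apply]
      norm_num [hcom, hcomb, hconj]
      try first
        | rfl
        | linear_combination -hoomb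
        | linear_combination hoomb
        | linear_combination (-(1/2)) * hom2 - (1/2) * homb2
        | linear_combination (1/2) * hsum
        | linear_combination (-(1/2)) * hsum
        | ring

private lemma uu_norm : ∀ k i, ‖uu k i‖ = 1 := by
  intro k i
  fin_cases k <;> fin_cases i <;>
    norm_num [uu, hnom, hnomb, habsom, habsomb, Matrix.cons_val_zero, Matrix.cons_val_one, Matrix.cons_val_two,
      Matrix.cons_val_three, Matrix.head_cons, Matrix.tail_cons]

set_option maxHeartbeats 1000000 in
private lemma stmt13_rank (C : Matrix (Fin 4) (Fin 4) ℂ)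
    (hC : C = !![1, ss, ss, 0; ss, 1, 0, 0; ss, 0, 1, 0; 0, 0, 0, 1]) :
    C.rank = 3 := by
  have hker : LinearMap.ker C.mulVecLin = Submodule.span ℂ {![1, -ss, -ss, 0]} := by
    ext v
    rw [LinearMap.mem_ker, Submodule.mem_span_singleton]
    constructor
    · intro hv
      rw [Matrix.mulVecLin_apply] at hv
      have h0 := congrFun hv 0
      have h1 := congrFun hv 1
      have h2 := congrFun hv 2
      have h3 := congrFun hv 3
      simp [hC, Matrix.mulVec, dotProduct, Fin.sum_univ_four] at h0 h1 h2 h3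
      refine ⟨v 0, ?_⟩
      funext i
      fin_cases i <;> simp
      · linear_combination -h1
      · linear_combination -h2
      · exact h3.symm
    · rintro ⟨a, rfl⟩
      rw [Matrix.mulVecLin_apply, Matrix.mulVec_smul]
      have : C *ᵥ ![1, -ss, -ss, 0] = 0 := by
        funext i
        fin_cases i <;>
          simp [hC, Matrix.mulVec, dotProduct, Fin.sum_univ_four] <;>
          (first
            | linear_combination (-4) * hs2
            | linear_combination (-2) * hs2
            | linear_combination 4 * hs2
            | linear_combination 2 * hs2)
      rw [this, smul_zero]
  have hnz : (![1, -ss, -ss, 0] : Fin 4 → ℂ) ≠ 0 := by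
    intro h
    have := congrFun h 0
    simp at this
  have h1 : Module.finrank ℂ (LinearMap.ker C.mulVecLin) = 1 := by
    rw [hker]
    exact finrank_span_singleton hnz
  have h2 := LinearMap.finrank_range_add_finrank_ker C.mulVecLin
  rw [h1, Module.finrank_fin_fun] at h2
  have : C.rank = Module.finrank ℂ (LinearMap.range C.mulVecLin) := rfl
  omega

set_option maxHeartbeats 1000000 in
private lemma stmt13_lowerBound {N : ℕ} (p : Fin N → ℝ) (u : Fin N → Fin 4 → ℂ)
    (hp : ∀ k, 0 ≤ p k) (hps : ∑ k, p k = 1) (hu : ∀ k i, ‖u k i‖ = 1)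
    (hd : (!![1, ss, ss, 0; ss, 1, 0, 0; ss, 0, 1, 0; 0, 0, 0, 1] : Matrix (Fin 4) (Fin 4) ℂ)
        = ∑ k, (p k : ℂ) • Matrix.vecMulVec (u k) (star (u k))) :
    4 ≤ N := by
  have hent : ∀ i j, (!![1, ss, ss, 0; ss, 1, 0, 0; ss, 0, 1, 0; 0, 0, 0, 1]
      : Matrix (Fin 4) (Fin 4) ℂ) i j
      = ∑ k, (p k : ℂ) * (u k i * (starRingEnd ℂ) (u k j)) := by
    intro i j
    rw [hd]
    simp [Matrix.sum_apply, Matrix.vecMulVec_apply, Complex.star_def]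
  have huu : ∀ k i, u k i * (starRingEnd ℂ) (u k i) = 1 := by
    intro k i
    rw [Complex.mul_conj]
    norm_cast
    simp [Complex.normSq_eq_norm_sq, hu]
  -- the kernel-vector quadratic form
  set d : Fin N → ℂ := fun k => u k 0 - ss * u k 1 - ss * u k 2 with hddef
  have key : ∑ k, (p k : ℂ) * (d k * (starRingEnd ℂ) (d k)) = 0 := by
    have h2 : ∑ k, (p k : ℂ) * (d k * (starRingEnd ℂ) (d k)) =
        (∑ k, (p k:ℂ) * (u k 0 * (starRingEnd ℂ) (u k 0)))
        - ss * (∑ k, (p k:ℂ) * (u k 0 * (starRingEnd ℂ) (u k 1)))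
        - ss * (∑ k, (p k:ℂ) * (u k 0 * (starRingEnd ℂ) (u k 2)))
        - ss * (∑ k, (p k:ℂ) * (u k 1 * (starRingEnd ℂ) (u k 0)))
        + (ss*ss) * (∑ k, (p k:ℂ) * (u k 1 * (starRingEnd ℂ) (u k 1)))
        + (ss*ss) * (∑ k, (p k:ℂ) * (u k 1 * (starRingEnd ℂ) (u k 2)))
        - ss * (∑ k, (p k:ℂ) * (u k 2 * (starRingEnd ℂ) (u k 0)))
        + (ss*ss) * (∑ k, (p k:ℂ) * (u k 2 * (starRingEnd ℂ) (u k 1)))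
        + (ss*ss) * (∑ k, (p k:ℂ) * (u k 2 * (starRingEnd ℂ) (u k 2))) := by
      simp only [Finset.mul_sum, ← Finset.sum_sub_distrib, ← Finset.sum_add_distrib]
      refine Finset.sum_congr rfl fun k _ => ?_
      simp only [hddef, map_sub, _root_.map_mul, hconj]
      ring
    rw [h2, ← hent 0 0, ← hent 0 1, ← hent 0 2, ← hent 1 0, ← hent 1 1, ← hent 1 2,
      ← hent 2 0, ← hent 2 1, ← hent 2 2]
    norm_num [Matrix.cons_val_two, Matrix.vecHead, Matrix.vecTail]
    linear_combination (-2 : ℂ) * hs2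
  have hd0 : ∀ k, p k ≠ 0 → d k = 0 := by
    have h3 : ∑ k, p k * Complex.normSq (d k) = 0 := by
      simp only [Complex.mul_conj] at key
      exact_mod_cast key
    intro k hk
    have h4 := (Finset.sum_eq_zero_iff_of_nonneg
      (fun j _ => mul_nonneg (hp j) (Complex.normSq_nonneg _))).mp h3 k (Finset.mem_univ k)
    have h5 : Complex.normSq (d k) = 0 := by
      rcases mul_eq_zero.mp h4 with h | h
      · exact absurd h hk
      · exact h
    exact Complex.normSq_eq_zero.mp h5
  -- the sign of each term
  set t : Fin N → ℝ := fun k => (u k 1 * (starRingEnd ℂ) (u k 2)).im with htdef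
  have hre : ∀ k, p k ≠ 0 →
      u k 1 * (starRingEnd ℂ) (u k 2) + (starRingEnd ℂ) (u k 1) * u k 2 = 0 := by
    intro k hk
    have hd0k : u k 0 = ss * u k 1 + ss * u k 2 := by linear_combination hd0 k hk
    have hc0 : (starRingEnd ℂ) (u k 0)
        = ss * (starRingEnd ℂ) (u k 1) + ss * (starRingEnd ℂ) (u k 2) := by
      have := congrArg (starRingEnd ℂ) hd0k
      simpa [map_add, _root_.map_mul, hconj] using this
    linear_combination 2*(huu k 0) - 2*(ss*ss)*(huu k 1) - 2*(ss*ss)*(huu k 2)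
      - 2*(2 + u k 1 * (starRingEnd ℂ) (u k 2) + (starRingEnd ℂ) (u k 1) * u k 2)*hs2
      - 2*((starRingEnd ℂ) (u k 0))*hd0k - 2*(ss * u k 1 + ss * u k 2)*hc0
  have hre0 : ∀ k, p k ≠ 0 → (u k 1 * (starRingEnd ℂ) (u k 2)).re = 0 := by
    intro k hk
    have h6 : u k 1 * (starRingEnd ℂ) (u k 2)
        + (starRingEnd ℂ) (u k 1 * (starRingEnd ℂ) (u k 2)) = 0 := by
      rw [_root_.map_mul, Complex.conj_conj]
      linear_combination hre k hk
    rw [Complex.add_conj] at h6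
    have := congrArg Complex.re h6
    norm_num at this
    simp only [Complex.mul_re, Complex.conj_re, Complex.conj_im]
    linarith [this]
  have hns : ∀ k, Complex.normSq (u k 1 * (starRingEnd ℂ) (u k 2)) = 1 := by
    intro k
    have : ‖u k 1 * (starRingEnd ℂ) (u k 2)‖ = 1 := by
      rw [norm_mul, RCLike.norm_conj, hu, hu, mul_one]
    rw [← Complex.sq_norm, this]
    norm_num
  have ht2 : ∀ k, p k ≠ 0 → t k * t k = 1 := by
    intro k hk
    have h7 := hns k
    rw [Complex.normSq_apply, hre0 k hk] at h7
    simpa [htdef] using h7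
  have ht1 : ∀ k, p k ≠ 0 → t k = 1 ∨ t k = -1 := fun k hk =>
    mul_self_eq_one_iff.mp (ht2 k hk)
  have hzq : ∀ k, p k ≠ 0 → u k 1 * (starRingEnd ℂ) (u k 2) = (t k : ℂ) * I := by
    intro k hk
    apply Complex.ext
    · simp [hre0 k hk]
    · simp [htdef]
  have hu2 : ∀ k, p k ≠ 0 → u k 2 = -(t k : ℂ) * I * u k 1 := by
    intro k hk
    have htc : (t k : ℂ) * (t k : ℂ) = 1 := by
      norm_cast
      exact ht2 k hk
    linear_combination ((t k:ℂ)*I*(u k 2))*(hzq k hk) - ((t k:ℂ)*I*(u k 1))*(huu k 2)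
      - (u k 2)*htc + ((t k:ℂ)*(t k:ℂ)*(u k 2))*Complex.I_mul_I
  -- entry equations
  have E12 : ∑ k, (p k : ℂ) * (u k 1 * (starRingEnd ℂ) (u k 2)) = 0 := by
    have := (hent 1 2).symm
    simpa using this
  have E13 : ∑ k, (p k : ℂ) * (u k 1 * (starRingEnd ℂ) (u k 3)) = 0 := by
    have := (hent 1 3).symm
    simpa using this
  have E23 : ∑ k, (p k : ℂ) * (u k 2 * (starRingEnd ℂ) (u k 3)) = 0 := by
    have := (hent 2 3).symm
    simpa using this
  -- ∑ p t = 0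
  have hpt : ∑ k, p k * t k = 0 := by
    have h8 : ∑ k, ((p k * t k : ℝ) : ℂ) * I = 0 := by
      rw [← E12]
      refine Finset.sum_congr rfl fun k _ => ?_
      by_cases hk : p k = 0
      · simp [hk]
      · rw [hzq k hk]
        push_cast
        ring
    rw [← Finset.sum_mul, ← Complex.ofReal_sum] at h8
    rcases mul_eq_zero.mp h8 with h | h
    · exact_mod_cast h
    · exact absurd h Complex.I_ne_zero
  -- ∑ p t Y = 0
  have E23t : ∑ k, (p k : ℂ) * ((t k : ℂ) * (u k 1 * (starRingEnd ℂ) (u k 3))) = 0 := by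
    have h9 : (-I) * ∑ k, (p k : ℂ) * ((t k : ℂ) * (u k 1 * (starRingEnd ℂ) (u k 3))) = 0 := by
      rw [Finset.mul_sum, ← E23]
      refine Finset.sum_congr rfl fun k _ => ?_
      by_cases hk : p k = 0
      · simp [hk]
      · rw [hu2 k hk]
        ring
    rcases mul_eq_zero.mp h9 with h | h
    · exact absurd h (by simp [Complex.I_ne_zero])
    · exact h
  -- each sign class has ≥ 2 elements
  have main : ∀ σ : ℝ, (σ = 1 ∨ σ = -1) →
      2 ≤ (Finset.univ.filter (fun k => p k ≠ 0 ∧ t k = σ)).card := by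
    intro σ hσ
    set T := Finset.univ.filter (fun k => p k ≠ 0 ∧ t k = σ) with hT
    have hσ2 : σ * σ = 1 := by rcases hσ with h | h <;> rw [h] <;> norm_num
    have hsum_p : ∑ k ∈ T, p k = 1/2 := by
      rw [hT, Finset.sum_filter]
      have step : ∑ k, (if p k ≠ 0 ∧ t k = σ then p k else 0)
          = ∑ k, (p k / 2 + (σ / 2) * (p k * t k)) := by
        refine Finset.sum_congr rfl fun k _ => ?_
        by_cases hk : p k = 0
        · simp [hk]
        · by_cases he : t k = σ
          · rw [if_pos ⟨hk, he⟩, he]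
            linear_combination (-(p k) / 2) * hσ2
          · rw [if_neg (by tauto)]
            have hts : t k = -σ := by
              rcases ht1 k hk with h | h <;> rcases hσ with g | g <;>
                rw [h, g] at he ⊢ <;> first | exact absurd rfl he | norm_num
            rw [hts]
            linear_combination (p k / 2) * hσ2
      rw [step, Finset.sum_add_distrib, ← Finset.sum_div, ← Finset.mul_sum, hps, hpt]
      norm_num
    have hsum_y : ∑ k ∈ T, (p k : ℂ) * (u k 1 * (starRingEnd ℂ) (u k 3)) = 0 := by
      rw [hT, Finset.sum_filter]
      have step : ∑ k, (if p k ≠ 0 ∧ t k = σ then (p k : ℂ) * (u k 1 * (starRingEnd ℂ) (u k 3)) else 0)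
          = ∑ k, ((p k : ℂ) * (u k 1 * (starRingEnd ℂ) (u k 3)) / 2
              + ((σ:ℂ) / 2) * ((p k : ℂ) * ((t k:ℂ) * (u k 1 * (starRingEnd ℂ) (u k 3))))) := by
        refine Finset.sum_congr rfl fun k _ => ?_
        have hσ2c : (σ:ℂ) * (σ:ℂ) = 1 := by exact_mod_cast hσ2
        by_cases hk : p k = 0
        · simp [hk]
        · by_cases he : t k = σ
          · rw [if_pos ⟨hk, he⟩, he]
            push_cast
            linear_combination (-(p k:ℂ) * (u k 1 * (starRingEnd ℂ) (u k 3)) / 2) * hσ2c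
          · rw [if_neg (by tauto)]
            have hts : t k = -σ := by
              rcases ht1 k hk with h | h <;> rcases hσ with g | g <;>
                rw [h, g] at he ⊢ <;> first | exact absurd rfl he | norm_num
            rw [hts]
            push_cast
            linear_combination ((p k:ℂ) * (u k 1 * (starRingEnd ℂ) (u k 3)) / 2) * hσ2c
      rw [step, Finset.sum_add_distrib, ← Finset.sum_div, ← Finset.mul_sum, E13, E23t]
      norm_num
    by_contra hlt
    push_neg at hlt
    have hcases : T.card = 0 ∨ T.card = 1 := by omega
    rcases hcases with hcard | hcard
    · rw [Finset.card_eq_zero] at hcard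
      rw [hcard] at hsum_p
      norm_num at hsum_p
    · obtain ⟨a, ha⟩ := Finset.card_eq_one.mp hcard
      rw [ha] at hsum_p hsum_y
      simp at hsum_p hsum_y
      rcases hsum_y with h | h | h
      · rw [h] at hsum_p; norm_num at hsum_p
      · have := hu a 1; rw [h] at this; norm_num at this
      · have h10 := hu a 3
        rw [← RCLike.norm_conj] at h10
        rw [h] at h10
        norm_num at h10
  -- conclude
  have d1 := main 1 (Or.inl rfl)
  have d2 := main (-1) (Or.inr rfl)
  have hdisj : Disjoint (Finset.univ.filter (fun k => p k ≠ 0 ∧ t k = (1:ℝ)))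
      (Finset.univ.filter (fun k => p k ≠ 0 ∧ t k = (-1:ℝ))) := by
    rw [Finset.disjoint_filter]
    rintro k _ ⟨_, h1⟩ ⟨_, h2⟩
    rw [h1] at h2
    norm_num at h2
  have hcard := Finset.card_union_of_disjoint hdisj
  have hle := Finset.card_le_univ ((Finset.univ.filter (fun k => p k ≠ 0 ∧ t k = (1:ℝ))) ∪
      (Finset.univ.filter (fun k => p k ≠ 0 ∧ t k = (-1:ℝ))))
  simp only [Finset.card_univ, Fintype.card_fin] at hle
  omega

end Stmt13Aux

/-- Example 3 of the paper. The explicit `4 × 4` correlation matrix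
with off-diagonal entries `1/√2` in positions (1,2),(2,1),(1,3),(3,1) has rank `3` and is
toroidal with toroidal rank `4`. -/
theorem stmt13 (C : Mat (Fin 4))
    (hC : C = !![1, (Real.sqrt 2 : ℂ)⁻¹, (Real.sqrt 2 : ℂ)⁻¹, 0;
                 (Real.sqrt 2 : ℂ)⁻¹, 1, 0, 0;
                 (Real.sqrt 2 : ℂ)⁻¹, 0, 1, 0;
                 0, 0, 0, 1]) :
    C.rank = 3 ∧ IsToroidal C ∧ toroidalRank C = 4 := by
  have hdecomp : IsToroidalDecomp C (fun _ => (1/4 : ℝ)) uu := by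
    refine ⟨fun k => by norm_num, ?_, uu_norm, ?_⟩
    · norm_num [Fin.sum_univ_four]
    · rw [hC]
      exact uu_decomp
  refine ⟨stmt13_rank C hC, ⟨4, fun _ => (1/4 : ℝ), uu, hdecomp⟩, ?_⟩
  have h4 : 4 ∈ {N : ℕ | ∃ (p : Fin N → ℝ) (u : Fin N → Fin 4 → ℂ), IsToroidalDecomp C p u} :=
    ⟨fun _ => (1/4 : ℝ), uu, hdecomp⟩
  refine le_antisymm (Nat.sInf_le h4) (le_csInf ⟨4, h4⟩ ?_)
  rintro N ⟨p, v, hp, hps, hv, hd⟩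
  rw [hC] at hd
  exact stmt13_lowerBound p v hp hps hv hd
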